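/- Let G be a finite group and let ℓ be the maximal order of an element of G. Then for every n and every generating symbol (H, Y, β) of SC_n(G) whose character sequence β has length r(β) ≤ n − ℓ, the class of (H, Y, β) in the combinatorial Burnside group BC_n(G) is zero; in particular the submodule BC_{n,r}(G) ⊆ BC_n(G) generated by reduced symbols with r(β) ≤ r vanishes for all 1 ≤ r ≤ n − ℓ. -/

import Mathlib

open scoped Classical

noncomputable section

namespace CBG

/-- The character group `A^∨ = Hom(A, ℂ^×)` of a group `A`, written additively. -/
abbrev Ch (A : Type*) [Group A] : Type _ := Additive (A →* ℂˣ)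

/-- A multiset of characters generates the character group. -/
def gens {A : Type*} [Group A] (β : Multiset (Ch A)) : Prop :=
  AddSubgroup.closure {b | b ∈ β} = ⊤

variable (G : Type*) [Group G]

/-- Generating symbols `(H, Y, β)` of the combinatorial symbols group `SC_n(G)`:
`H ⊆ G` abelian, `H ⊆ Y ⊆ Z_G(H)`, and `β` a multiset (= sequence modulo the
reordering relation (O)) of nontrivial characters of `H`, of length `1 ≤ r ≤ n`,
generating `H^∨`. -/
structure Symbol (n : ℕ) where
  H : Subgroup G
  Y : Subgroup G
  habelian : IsMulCommutative H
  hHY : H ≤ Y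
  hYC : Y ≤ Subgroup.centralizer (H : Set G)
  β : Multiset (Ch H)
  hcard₁ : 1 ≤ Multiset.card β
  hcard₂ : Multiset.card β ≤ n
  hne : ∀ b ∈ β, b ≠ 0
  hgen : gens β

/-- The combinatorial symbols group `SC_n(G)`: the free `ℤ`-module on the symbols. -/
abbrev SC (n : ℕ) : Type _ := Symbol G n →₀ ℤ

/-- The symbol `(H, Y, β)` as an element of `SC_n(G)`, with the convention that
an invalid symbol (in particular, one whose character sequence contains the
trivial character) is `0`. -/
def mkSC (n : ℕ) (H Y : Subgroup G) (β : Multiset (Ch H)) : SC G n :=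
  if h : IsMulCommutative H ∧ H ≤ Y ∧ Y ≤ Subgroup.centralizer (H : Set G) ∧
      1 ≤ Multiset.card β ∧ Multiset.card β ≤ n ∧ (∀ b ∈ β, b ≠ 0) ∧ gens β then
    Finsupp.single ⟨H, Y, h.1, h.2.1, h.2.2.1, β, h.2.2.2.1, h.2.2.2.2.1,
      h.2.2.2.2.2.1, h.2.2.2.2.2.2⟩ 1
  else 0

/-- Restriction of a character to a smaller subgroup. -/
def resCh {H K : Subgroup G} (h : K ≤ H) (b : Ch H) : Ch K :=
  Additive.ofMul ((Additive.toMul b).comp (Subgroup.inclusion h))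

/-- The conjugate subgroup `gHg⁻¹`. -/
def conjSub (g : G) (H : Subgroup G) : Subgroup G :=
  Subgroup.map (MulAut.conj g : G ≃* G) H

/-- Transport of a character of `H` to a character of `K = gHg⁻¹` along conjugation by `g`. -/
def conjChTo {H K : Subgroup G} (g : G) (hK : conjSub G g H = K) (b : Ch H) : Ch K :=
  Additive.ofMul ((Additive.toMul b).comp
    (((MulEquiv.subgroupMap (MulAut.conj g : G ≃* G) H).trans
      (MulEquiv.subgroupCongr hK)).symm.toMonoidHom))

/-- Relation (C): conjugation. -/
def relC (n : ℕ) : Set (SC G n) :=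
  {x | ∃ (s : Symbol G n) (g : G),
    x = Finsupp.single s 1 -
        mkSC G n (conjSub G g s.H) (conjSub G g s.Y) (s.β.map (conjChTo G g rfl))}

/-- Relation (V): vanishing. -/
def relV (n : ℕ) : Set (SC G n) :=
  {x | ∃ s : Symbol G n,
    (s.H = ⊥ ∨ ∃ (b₁ b₂ : Ch s.H) (rest : Multiset (Ch s.H)),
      s.β = b₁ ::ₘ b₂ ::ₘ rest ∧ b₁ + b₂ = 0) ∧
    x = Finsupp.single s 1}

/-- Relation (B2): blowup. -/
def relB2 (n : ℕ) : Set (SC G n) :=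
  {x | ∃ (s : Symbol G n) (b₁ b₂ : Ch s.H) (rest : Multiset (Ch s.H)),
    s.β = b₁ ::ₘ b₂ ::ₘ rest ∧
    ((b₁ = b₂ ∧ x = Finsupp.single s 1 - mkSC G n s.H s.Y (b₂ ::ₘ rest)) ∨
     (b₁ ≠ b₂ ∧ (∃ b ∈ s.β, b ∈ AddSubgroup.zmultiples (b₁ - b₂)) ∧
        x = Finsupp.single s 1 - mkSC G n s.H s.Y ((b₁ - b₂) ::ₘ b₂ ::ₘ rest)
            - mkSC G n s.H s.Y (b₁ ::ₘ (b₂ - b₁) ::ₘ rest)) ∨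
     (b₁ ≠ b₂ ∧ ¬(∃ b ∈ s.β, b ∈ AddSubgroup.zmultiples (b₁ - b₂)) ∧
        x = Finsupp.single s 1 - mkSC G n s.H s.Y ((b₁ - b₂) ::ₘ b₂ ::ₘ rest)
            - mkSC G n s.H s.Y (b₁ ::ₘ (b₂ - b₁) ::ₘ rest)
            - mkSC G n (Subgroup.map s.H.subtype (MonoidHom.ker (Additive.toMul (b₁ - b₂))))
                s.Y (s.β.map (resCh G (Subgroup.map_subtype_le _)))))}

/-- Relation (B2'): modified blowup. -/
def relB2' (n : ℕ) : Set (SC G n) :=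
  {x | ∃ (s : Symbol G n) (b₁ b₂ : Ch s.H) (rest : Multiset (Ch s.H)),
    s.β = b₁ ::ₘ b₂ ::ₘ rest ∧
    ((b₁ = b₂ ∧ x = Finsupp.single s 1 - mkSC G n s.H s.Y (b₂ ::ₘ rest)) ∨
     (b₁ ≠ b₂ ∧
        x = Finsupp.single s 1 - mkSC G n s.H s.Y ((b₁ - b₂) ::ₘ b₂ ::ₘ rest)
            - mkSC G n s.H s.Y (b₁ ::ₘ (b₂ - b₁) ::ₘ rest)))}

/-- The combinatorial Burnside group `BC_n(G)`. -/
abbrev BC (n : ℕ) : Type _ :=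
  SC G n ⧸ Submodule.span ℤ (relC G n ∪ relV G n ∪ relB2 G n)

/-- The group `BC'_n(G)`. -/
abbrev BC' (n : ℕ) : Type _ :=
  SC G n ⧸ Submodule.span ℤ (relC G n ∪ relV G n ∪ relB2' G n)

/-- Projection `SC_n(G) → BC_n(G)`. -/
def BCmk (n : ℕ) : SC G n →ₗ[ℤ] BC G n :=
  Submodule.mkQ _

/-- Projection `SC_n(G) → BC'_n(G)`. -/
def BC'mk (n : ℕ) : SC G n →ₗ[ℤ] BC' G n :=
  Submodule.mkQ _

end CBG

open CBG

namespace CBGAux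

open CBG

variable (G : Type*) [Group G] (n : ℕ)

/-- The validity condition of `mkSC`. -/
def Ok (H Y : Subgroup G) (β : Multiset (Ch H)) : Prop :=
  IsMulCommutative H ∧ H ≤ Y ∧ Y ≤ Subgroup.centralizer (H : Set G) ∧
    1 ≤ Multiset.card β ∧ Multiset.card β ≤ n ∧ (∀ b ∈ β, b ≠ 0) ∧ gens β

/-- Package valid data into a symbol. -/
def mkSym (H Y : Subgroup G) (β : Multiset (Ch H)) (h : Ok G n H Y β) : Symbol G n :=
  ⟨H, Y, h.1, h.2.1, h.2.2.1, β, h.2.2.2.1, h.2.2.2.2.1, h.2.2.2.2.2.1, h.2.2.2.2.2.2⟩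

lemma mkSC_of_ok {H Y : Subgroup G} {β : Multiset (Ch H)} (h : Ok G n H Y β) :
    mkSC G n H Y β = Finsupp.single (mkSym G n H Y β h) 1 := by
  unfold CBG.mkSC
  exact dif_pos h

lemma mkSC_of_not_ok {H Y : Subgroup G} {β : Multiset (Ch H)} (h : ¬ Ok G n H Y β) :
    mkSC G n H Y β = 0 := by
  unfold CBG.mkSC
  exact dif_neg h

lemma mkSC_self (s : Symbol G n) : mkSC G n s.H s.Y s.β = Finsupp.single s 1 := by
  have h : Ok G n s.H s.Y s.β :=
    ⟨s.habelian, s.hHY, s.hYC, s.hcard₁, s.hcard₂, s.hne, s.hgen⟩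
  rw [mkSC_of_ok G n h]
  cases s
  rfl

lemma BCmk_mem {x : SC G n} (h : x ∈ relC G n ∪ relV G n ∪ relB2 G n) :
    BCmk G n x = 0 := by
  exact (Submodule.Quotient.mk_eq_zero _).2 (Submodule.subset_span h)

lemma V_zero' {H Y : Subgroup G} {β : Multiset (Ch H)} (b₁ b₂ : Ch H) (rest : Multiset (Ch H))
    (hβ : β = b₁ ::ₘ b₂ ::ₘ rest) (hsum : b₁ + b₂ = 0) :
    BCmk G n (mkSC G n H Y β) = 0 := by
  by_cases h : Ok G n H Y β
  · rw [mkSC_of_ok G n h]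
    exact BCmk_mem G n (Or.inl (Or.inr
      ⟨mkSym G n H Y β h, Or.inr ⟨b₁, b₂, rest, hβ, hsum⟩, rfl⟩))
  · rw [mkSC_of_not_ok G n h, map_zero]

lemma dup {H Y : Subgroup G} {β : Multiset (Ch H)} (h : Ok G n H Y β)
    (b : Ch H) (rest : Multiset (Ch H)) (hβ : β = b ::ₘ b ::ₘ rest) :
    BCmk G n (mkSC G n H Y β) = BCmk G n (mkSC G n H Y (b ::ₘ rest)) := by
  rw [mkSC_of_ok G n h]
  have hrel : (Finsupp.single (mkSym G n H Y β h) 1 - mkSC G n H Y (b ::ₘ rest))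
      ∈ relB2 G n :=
    ⟨mkSym G n H Y β h, b, b, rest, hβ, Or.inl ⟨rfl, rfl⟩⟩
  have h0 := BCmk_mem G n (Or.inr hrel)
  rw [map_sub, sub_eq_zero] at h0
  exact h0

lemma blow {H Y : Subgroup G} {β : Multiset (Ch H)} (h : Ok G n H Y β)
    (b₁ b₂ : Ch H) (rest : Multiset (Ch H)) (hβ : β = b₁ ::ₘ b₂ ::ₘ rest)
    (h12 : b₁ ≠ b₂) (hc : ∃ c ∈ β, c ∈ AddSubgroup.zmultiples (b₁ - b₂)) :
    BCmk G n (mkSC G n H Y β) =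
      BCmk G n (mkSC G n H Y ((b₁ - b₂) ::ₘ b₂ ::ₘ rest)) +
      BCmk G n (mkSC G n H Y (b₁ ::ₘ (b₂ - b₁) ::ₘ rest)) := by
  rw [mkSC_of_ok G n h]
  have hrel : (Finsupp.single (mkSym G n H Y β h) 1
      - mkSC G n H Y ((b₁ - b₂) ::ₘ b₂ ::ₘ rest)
      - mkSC G n H Y (b₁ ::ₘ (b₂ - b₁) ::ₘ rest)) ∈ relB2 G n :=
    ⟨mkSym G n H Y β h, b₁, b₂, rest, hβ, Or.inr (Or.inl ⟨h12, hc, rfl⟩)⟩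
  have h0 := BCmk_mem G n (Or.inr hrel)
  rw [map_sub, map_sub, sub_sub, sub_eq_zero] at h0
  exact h0

end CBGAux

open CBGAux

/-- Let `G` be a finite group and `ℓ` the maximal order of an element of `G`.  Then for
every `n`, every generating symbol `(H, Y, β)` of `SC_n(G)` with `r(β) ≤ n - ℓ` has
vanishing class in `BC_n(G)`; in particular, the submodule `BC_{n,r}(G) ⊆ BC_n(G)`
generated by (classes of) reduced symbols with `r(β) ≤ r` vanishes for all
`1 ≤ r ≤ n - ℓ`. -/

theorem BC_symbol_short_vanishes (G : Type*) [Group G] [Fintype G]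
    (ℓ : ℕ) (hℓ : IsGreatest (Set.range fun g : G => orderOf g) ℓ) (n : ℕ) :
    (∀ s : Symbol G n, Multiset.card s.β ≤ n - ℓ →
      BCmk G n (Finsupp.single s 1) = 0) ∧
    (∀ r : ℕ, 1 ≤ r → r ≤ n - ℓ →
      Submodule.span ℤ {x : BC G n | ∃ s : Symbol G n,
        s.β.Nodup ∧ Multiset.card s.β ≤ r ∧ x = BCmk G n (Finsupp.single s 1)} = ⊥) := by
  have part1 : ∀ s : Symbol G n, Multiset.card s.β ≤ n - ℓ →
      BCmk G n (Finsupp.single s 1) = 0 := by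
    intro s hcard
    -- pick a character b in β
    have hβpos : 0 < Multiset.card s.β := s.hcard₁
    obtain ⟨b, hb⟩ := Multiset.card_pos_iff_exists_mem.1 hβpos
    have hb0 : b ≠ 0 := s.hne b hb
    -- commutativity and finiteness of H
    haveI := s.habelian
    haveI : Finite ↥s.H := Subtype.finite
    -- exponent bound : the additive order m of b satisfies 2 ≤ m ≤ ℓ
    have hee : Monoid.ExponentExists ↥s.H := Monoid.ExponentExists.of_finite
    have hpow : (Additive.toMul b) ^ Monoid.exponent ↥s.H = 1 := by
      ext x
      simp only [MonoidHom.pow_apply, MonoidHom.one_apply, ← map_pow,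
        Monoid.pow_exponent_eq_one, map_one]
    have heb : Monoid.exponent ↥s.H • b = 0 := by
      have h1 : (Monoid.exponent ↥s.H • b).toMul = 1 := by
        rw [toMul_nsmul]; exact hpow
      simpa using congrArg Additive.ofMul h1
    have hfin : IsOfFinAddOrder b :=
      isOfFinAddOrder_iff_nsmul_eq_zero.mpr ⟨_, hee.exponent_pos, heb⟩
    obtain ⟨m, hm⟩ : ∃ m, addOrderOf b = m := ⟨_, rfl⟩
    have hm0 : 0 < m := hm ▸ hfin.addOrderOf_pos
    have hm1 : m ≠ 1 := by
      intro h1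
      exact hb0 (AddMonoid.addOrderOf_eq_one_iff.mp (hm.trans h1))
    have hmdvd : m ∣ Monoid.exponent ↥s.H := hm ▸ addOrderOf_dvd_of_nsmul_eq_zero heb
    have heℓ : Monoid.exponent ↥s.H ≤ ℓ := by
      letI : CommMonoid ↥s.H :=
        { (inferInstance : Monoid ↥s.H) with mul_comm := fun a b => s.habelian.is_comm.comm a b }
      obtain ⟨g, hg⟩ := Monoid.exists_orderOf_eq_exponent hee
      calc Monoid.exponent ↥s.H = orderOf g := hg.symm
        _ = orderOf (g : G) := (Subgroup.orderOf_coe g).symm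
        _ ≤ ℓ := hℓ.2 ⟨(g : G), rfl⟩
    have hmℓ : m ≤ ℓ := le_trans (Nat.le_of_dvd hee.exponent_pos hmdvd) heℓ
    have h2m : 2 ≤ m := by omega
    have hr1 : 1 ≤ Multiset.card s.β := s.hcard₁
    have hℓn : ℓ < n := by omega
    have hsmul0 : ∀ k : ℕ, 0 < k → k < m → k • b ≠ 0 := by
      intro k hk1 hk2 h0
      have := addOrderOf_dvd_of_nsmul_eq_zero h0
      rw [hm] at this
      have := Nat.le_of_dvd hk1 this
      omega
    -- the chain of multisets
    set W : ℕ → Multiset (Ch ↥s.H) :=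
      fun k => (Multiset.range k).map (fun i : ℕ => (i + 1) • b) + s.β with hW
    have hW0 : W 0 = s.β := by simp [hW]
    have hWsucc : ∀ k : ℕ, W (k + 1) = ((k + 1) • b) ::ₘ W k := by
      intro k
      simp [hW, Multiset.range_succ]
    have hWcard : ∀ k : ℕ, Multiset.card (W k) = k + Multiset.card s.β := by
      intro k; simp [hW]
    have hsub : ∀ k : ℕ, ∀ c ∈ s.β, c ∈ W k := by
      intro k c hc
      exact Multiset.mem_add.2 (Or.inr hc)
    have hWne : ∀ k : ℕ, k < m → ∀ c ∈ W k, c ≠ 0 := by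
      intro k hk c hc
      rw [hW] at hc
      rcases Multiset.mem_add.1 hc with hc | hc
      · obtain ⟨i, hi, rfl⟩ := Multiset.mem_map.1 hc
        have hi' : i < k := Multiset.mem_range.1 hi
        exact hsmul0 (i + 1) (Nat.succ_pos i) (by omega)
      · exact s.hne c hc
    have hOk : ∀ γ : Multiset (Ch ↥s.H), (∀ c ∈ γ, c ≠ 0) →
        Multiset.card γ ≤ n → (∀ c ∈ s.β, c ∈ γ) → Ok G n s.H s.Y γ := by
      intro γ h1 h2 h3
      refine ⟨s.habelian, s.hHY, s.hYC, ?_, h2, h1, ?_⟩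
      · exact Multiset.card_pos_iff_exists_mem.2 ⟨b, h3 b hb⟩
      · have hmono : AddSubgroup.closure {c | c ∈ s.β} ≤ AddSubgroup.closure {c | c ∈ γ} :=
          AddSubgroup.closure_mono (fun c hc => h3 c hc)
        have hβgen := s.hgen
        unfold gens at hβgen ⊢
        rw [eq_top_iff]
        rw [hβgen] at hmono
        exact hmono
    -- the chain of equalities
    have chain : ∀ k : ℕ, 1 ≤ k → k < m →
        BCmk G n (Finsupp.single s 1) = BCmk G n (mkSC G n s.H s.Y (W k)) := by
      intro k
      induction k with
      | zero => omega
      | succ k ih =>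
        intro _ hkm
        rcases Nat.eq_zero_or_pos k with rfl | hkpos
        · -- base case : W 1 = b ::ₘ b ::ₘ ρ
          obtain ⟨ρ, hρ⟩ := Multiset.exists_cons_of_mem hb
          have hW1 : W (0 + 1) = b ::ₘ b ::ₘ ρ := by
            rw [hWsucc 0, hW0, hρ]
            simp
            exact one_nsmul b
          have hOk1 : Ok G n s.H s.Y (W (0 + 1)) := by
            refine hOk _ (hWne _ (by omega)) ?_ (hsub _)
            rw [hWcard]; omega
          have e1 : BCmk G n (Finsupp.single s 1)
              = BCmk G n (mkSC G n s.H s.Y (b ::ₘ ρ)) := by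
            rw [← hρ, mkSC_self]
          rw [e1]
          exact (dup G n hOk1 b ρ hW1).symm
        · -- inductive step
          obtain ⟨j, rfl⟩ : ∃ j, k = j + 1 := ⟨k - 1, by omega⟩
          have ih' := ih (by omega) (by omega)
          have hd : W (j + 1 + 1) = ((j + 1 + 1) • b) ::ₘ ((j + 1) • b) ::ₘ W j := by
            rw [hWsucc, hWsucc]
          have hdiff : ((j + 1 + 1) : ℕ) • b - ((j + 1) : ℕ) • b = b :=
            by rw [succ_nsmul' b (j + 1)]; abel
          have hdiff2 : ((j + 1) : ℕ) • b - ((j + 1 + 1) : ℕ) • b = -b := by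
            rw [← neg_sub (((j + 1 + 1) : ℕ) • b) (((j + 1) : ℕ) • b), hdiff]
          have hOk2 : Ok G n s.H s.Y (W (j + 1 + 1)) := by
            refine hOk _ (hWne _ hkm) ?_ (hsub _)
            rw [hWcard]; omega
          have h12 : ((j + 1 + 1) : ℕ) • b ≠ ((j + 1) : ℕ) • b := by
            intro hEq
            apply hb0
            rw [← hdiff]
            exact sub_eq_zero_of_eq hEq
          have hc : ∃ c ∈ W (j + 1 + 1),
              c ∈ AddSubgroup.zmultiples (((j + 1 + 1) : ℕ) • b - ((j + 1) : ℕ) • b) := by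
            refine ⟨b, hsub _ b hb, ?_⟩
            rw [hdiff]
            exact AddSubgroup.mem_zmultiples b
          have hblow := blow G n hOk2 _ _ _ hd h12 hc
          rw [hdiff, hdiff2] at hblow
          -- the second summand vanishes
          have hbj : b ∈ W j := hsub j b hb
          have hz : BCmk G n (mkSC G n s.H s.Y
              (((j + 1 + 1) : ℕ) • b ::ₘ (-b) ::ₘ W j)) = 0 := by
            have hrw : ((j + 1 + 1) : ℕ) • b ::ₘ (-b) ::ₘ W j
                = (-b) ::ₘ b ::ₘ (((j + 1 + 1) : ℕ) • b ::ₘ (W j).erase b) := by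
              conv_lhs => rw [← Multiset.cons_erase hbj]
              rw [Multiset.cons_swap (((j + 1 + 1) : ℕ) • b) (-b),
                Multiset.cons_swap (((j + 1 + 1) : ℕ) • b) b]
            exact V_zero' G n _ _ _ hrw (neg_add_cancel b)
          -- the first summand is the previous chain element
          have hbj1 : b ∈ W (j + 1) := hsub _ b hb
          have h1 : BCmk G n (mkSC G n s.H s.Y (b ::ₘ ((j + 1) : ℕ) • b ::ₘ W j))
              = BCmk G n (Finsupp.single s 1) := by
            have hγ : b ::ₘ ((j + 1) : ℕ) • b ::ₘ W j
                = b ::ₘ b ::ₘ (W (j + 1)).erase b := by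
              rw [← hWsucc]
              conv_lhs => rw [← Multiset.cons_erase hbj1]
            have hOk3 : Ok G n s.H s.Y (b ::ₘ ((j + 1) : ℕ) • b ::ₘ W j) := by
              refine hOk _ ?_ ?_ ?_
              · intro c hc
                rcases Multiset.mem_cons.1 hc with rfl | hc
                · exact hb0
                rcases Multiset.mem_cons.1 hc with rfl | hc
                · exact hsmul0 (j + 1) (Nat.succ_pos j) (by omega)
                · exact hWne j (by omega) c hc
              · simp only [Multiset.card_cons]
                rw [hWcard]; omega
              · intro c hc
                exact Multiset.mem_cons_of_mem (Multiset.mem_cons_of_mem (hsub j c hc))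
            rw [dup G n hOk3 b _ hγ, Multiset.cons_erase hbj1]
            exact ih'.symm
          rw [hblow, hz, h1, add_zero]
    -- conclude : W (m-1) contains (m-1)•b and b with sum 0
    obtain ⟨j₀, hj₀⟩ : ∃ j, m - 1 = j + 1 := ⟨m - 2, by omega⟩
    have hchain := chain (m - 1) (by omega) (by omega)
    rw [hj₀] at hchain
    have hbj : b ∈ W j₀ := hsub j₀ b hb
    have hdec : W (j₀ + 1) = ((j₀ + 1) : ℕ) • b ::ₘ b ::ₘ (W j₀).erase b := by
      rw [hWsucc]
      conv_lhs => rw [← Multiset.cons_erase hbj]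
    have hsum : ((j₀ + 1) : ℕ) • b + b = 0 := by
      have h1 : ((j₀ + 1 + 1) : ℕ) • b = ((j₀ + 1) : ℕ) • b + b := succ_nsmul b (j₀ + 1)
      have h2 : j₀ + 1 + 1 = m := by omega
      rw [← h1, h2, ← hm]
      exact addOrderOf_nsmul_eq_zero b
    have hzz : BCmk G n (mkSC G n s.H s.Y (W (j₀ + 1))) = 0 :=
      V_zero' G n _ _ _ hdec hsum
    exact hchain.trans hzz
  refine ⟨part1, ?_⟩
  intro r hr1 hrn
  rw [Submodule.span_eq_bot]
  rintro x ⟨s, -, hcard, rfl⟩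
  exact part1 s (hcard.trans hrn)
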